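/- For every b ∈ ℂ and all m, n ∈ ℤ the following identities of ℂ-linear operators on W hold: L_m∘L_n − L_n∘L_m = (n−m)·L_{m+n}; L_m∘G_n − G_n∘L_m = (n − m/2)·G_{m+n}; G_m∘G_n + G_n∘G_m = −2·L_{m+n}. (Thus these operators define a representation of the N=1 Ramond algebra on W with the central element acting as 0.) -/

import Mathlib

/- STATEMENT 2: the twisted operators L_m, G_m on W = ℂ[t,t⁻¹] ⊕ ξℂ[t,t⁻¹] satisfy the
defining relations of the N=1 Ramond algebra with the central element acting as 0. -/

open LaurentPolynomial

noncomputable section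

abbrev Lp := LaurentPolynomial ℂ

/-- `L_m(f,g) = (t^m(D+mb)f, t^m(D+m(b+1/2))g)` -/
def Lop (D : Lp →ₗ[ℂ] Lp) (b : ℂ) (m : ℤ) : Lp × Lp → Lp × Lp :=
  fun w => (T m * (D w.1 + ((m : ℂ) * b) • w.1),
            T m * (D w.2 + ((m : ℂ) * (b + 1 / 2)) • w.2))

/-- `G_m(f,g) = (−t^m g, t^m(D+2mb)f)` -/
def Gop (D : Lp →ₗ[ℂ] Lp) (b : ℂ) (m : ℤ) : Lp × Lp → Lp × Lp :=
  fun w => (-(T m * w.2), T m * (D w.1 + (2 * (m : ℂ) * b) • w.1))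

lemma D_T_mul (D : Lp →ₗ[ℂ] Lp) (hD : ∀ n : ℤ, D (T n) = (n : ℂ) • T n)
    (m : ℤ) (f : Lp) : D (T m * f) = (m : ℂ) • (T m * f) + T m * D f := by
  induction f using LaurentPolynomial.induction_on' with
  | add p q hp hq =>
    rw [mul_add, map_add, hp, hq, map_add, mul_add, smul_add]; ring
  | C_mul_T n a =>
    have hC : C a * T n = a • T n := by
      rw [Algebra.smul_def, ← C_eq_algebraMap]
    rw [hC, mul_smul_comm, ← T_add, map_smul, map_smul, hD, hD]
    simp only [mul_smul_comm, ← T_add, smul_smul]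
    rw [← add_smul]
    push_cast
    ring_nf

theorem stmt2 (D : Lp →ₗ[ℂ] Lp)
    (hD : ∀ n : ℤ, D (T n) = (n : ℂ) • T n) (b : ℂ) (m n : ℤ) :
    (∀ w, Lop D b m (Lop D b n w) - Lop D b n (Lop D b m w)
        = ((n : ℂ) - (m : ℂ)) • Lop D b (m + n) w) ∧
    (∀ w, Lop D b m (Gop D b n w) - Gop D b n (Lop D b m w)
        = ((n : ℂ) - (m : ℂ) / 2) • Gop D b (m + n) w) ∧
    (∀ w, Gop D b m (Gop D b n w) + Gop D b n (Gop D b m w)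
        = (-2 : ℂ) • Lop D b (m + n) w) := by
  have key := D_T_mul D hD
  refine ⟨fun w => ?_, fun w => ?_, fun w => ?_⟩ <;>
  · simp only [Lop, Gop, Prod.ext_iff, Prod.smul_fst, Prod.smul_snd, Prod.fst_sub,
      Prod.snd_sub, Prod.fst_add, Prod.snd_add, map_add, map_smul, map_mul, map_neg,
      mul_neg, neg_mul, key, Prod.smul_mk, Prod.mk_sub_mk, Prod.mk_add_mk]
    constructor <;>
    · simp only [mul_add, mul_neg, neg_mul, mul_smul_comm, ← mul_assoc, ← T_add,
        smul_add, smul_neg, smul_smul, neg_neg, neg_add, add_comm n m]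
      push_cast
      module

end
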